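/- For any simple matroid M and any chain of flats X_1 ⊆ ⋯ ⊆ X_k, the sign of the k-th chain Möbius function is sgn(μ^k(X_1,…,X_k)) = ∏_{i=1}^k (−1)^{rk(X_i)}; in particular μ^k(X_1,…,X_k) is never zero on chains of flats of a simple matroid. -/

import Mathlib

open Finset

def IsMatroidRk (α : Type*) [DecidableEq α] [Fintype α] (rk : Finset α → ℕ) : Prop :=
  rk ∅ = 0 ∧ (∀ a : α, rk {a} ≤ 1) ∧ (∀ A B : Finset α, A ⊆ B → rk A ≤ rk B) ∧
    (∀ A B : Finset α, rk (A ∩ B) + rk (A ∪ B) ≤ rk A + rk B)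

def chains (α : Type*) [DecidableEq α] [Fintype α] (k : ℕ) : Finset (Fin k → Finset α) :=
  Finset.univ.filter (fun f => ∀ i j : Fin k, i ≤ j → f i ⊆ f j)

def chainChar {α : Type*} [DecidableEq α] [Fintype α] (rk : Finset α → ℕ) (k : ℕ)
    {R : Type*} [CommRing R] (t : Fin k → R) : R :=
  ∑ f ∈ chains α k, ∏ i, (-1 : R) ^ (f i).card * t i ^ (rk Finset.univ - rk (f i))

/-- A flat of a matroid: adding any element raises the rank. -/
def IsFlat {α : Type*} [DecidableEq α] [Fintype α] (rk : Finset α → ℕ)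
    (F : Finset α) : Prop :=
  ∀ a : α, a ∉ F → rk F < rk (insert a F)

instance {α : Type*} [DecidableEq α] [Fintype α] (rk : Finset α → ℕ)
    (F : Finset α) : Decidable (IsFlat rk F) := by
  unfold IsFlat; infer_instance

/-- The closure of a set: all elements not raising the rank. -/
def matCl {α : Type*} [DecidableEq α] [Fintype α] (rk : Finset α → ℕ)
    (S : Finset α) : Finset α :=
  Finset.univ.filter (fun a => rk (insert a S) = rk S)

/-- The k-th chain Möbius function on a chain of flats. -/
def chainMu {α : Type*} [DecidableEq α] [Fintype α] (rk : Finset α → ℕ) (k : ℕ)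
    (X : Fin k → Finset α) : ℤ :=
  ∑ f ∈ (chains α k).filter (fun f => ∀ i, matCl rk (f i) = X i),
    ∏ i, (-1 : ℤ) ^ (f i).card

/-- A matroid is simple if singletons have rank 1 and pairs rank 2. -/
def IsSimpleRk {α : Type*} [DecidableEq α] [Fintype α] (rk : Finset α → ℕ) : Prop :=
  (∀ a : α, rk {a} = 1) ∧ ∀ a b : α, a ≠ b → rk {a, b} = 2

section Aux
variable {α : Type*} [DecidableEq α] [Fintype α] {rk : Finset α → ℕ}

lemma rk_mono (h : IsMatroidRk α rk) {A B : Finset α} (hAB : A ⊆ B) : rk A ≤ rk B :=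
  h.2.2.1 _ _ hAB

lemma rk_insert_le (h : IsMatroidRk α rk) (A : Finset α) (a : α) :
    rk (insert a A) ≤ rk A + 1 := by
  have hsub := h.2.2.2 {a} A
  have h1 : rk {a} ≤ 1 := h.2.1 a
  have h2 : insert a A = {a} ∪ A := Finset.insert_eq a A
  rw [← h2] at hsub
  omega

lemma rk_absorb (h : IsMatroidRk α rk) {A B : Finset α} (hAB : A ⊆ B) {a : α}
    (ha : rk (insert a A) = rk A) : rk (insert a B) = rk B := by
  have hsub := h.2.2.2 (insert a A) B
  have h1 : A ⊆ insert a A ∩ B := subset_inter (subset_insert a A) hAB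
  have h2 : insert a A ∪ B = insert a B := by
    rw [Finset.insert_union]
    congr 1
    exact Finset.union_eq_right.mpr hAB
  have hm1 : rk A ≤ rk (insert a A ∩ B) := rk_mono h h1
  have hm2 : rk B ≤ rk (insert a B) := rk_mono h (subset_insert _ _)
  rw [h2, ha] at hsub
  omega

lemma rk_union_absorb (h : IsMatroidRk α rk) {U V : Finset α}
    (hU : ∀ a ∈ U, rk (insert a V) = rk V) : rk (U ∪ V) = rk V := by
  induction U using Finset.induction_on with
  | empty => simp
  | insert a U ha ih =>
    rw [Finset.insert_union]
    have h1 : rk (U ∪ V) = rk V := ih (fun b hb => hU b (mem_insert_of_mem hb))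
    rw [← h1]
    exact rk_absorb h Finset.subset_union_right (hU a (mem_insert_self a U))

lemma mem_matCl_iff {S : Finset α} {a : α} : a ∈ matCl rk S ↔ rk (insert a S) = rk S := by
  simp [matCl]

lemma subset_matCl (S : Finset α) : S ⊆ matCl rk S := fun a ha => by
  simp [matCl, Finset.insert_eq_self.mpr ha]

lemma matCl_eq_flat_iff (h : IsMatroidRk α rk) {Z : Finset α} (hZ : IsFlat rk Z)
    (S : Finset α) : matCl rk S = Z ↔ S ⊆ Z ∧ rk S = rk Z := by
  constructor
  · rintro rfl
    refine ⟨subset_matCl S, ?_⟩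
    have h1 : rk (matCl rk S ∪ S) = rk S :=
      rk_union_absorb h (fun a ha => mem_matCl_iff.mp ha)
    rw [Finset.union_eq_left.mpr (subset_matCl S)] at h1
    exact h1.symm
  · rintro ⟨hSZ, hrk⟩
    ext a
    rw [mem_matCl_iff]
    constructor
    · intro ha
      by_contra haZ
      have h2 : rk (insert a Z) = rk Z := rk_absorb h hSZ ha
      exact absurd h2 (Nat.ne_of_gt (hZ a haZ))
    · intro ha
      have h2 : insert a S ⊆ Z := insert_subset ha hSZ
      have := rk_mono h h2
      have := rk_mono h (subset_insert a S)
      omega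

lemma matCl_self_of_flat (h : IsMatroidRk α rk) {Z : Finset α} (hZ : IsFlat rk Z) :
    matCl rk Z = Z := (matCl_eq_flat_iff h hZ Z).mpr ⟨subset_refl _, rfl⟩

end Aux
section KeyA
variable {α : Type*} [DecidableEq α] [Fintype α] {rk : Finset α → ℕ}

lemma keyA (h : IsMatroidRk α rk) :
    ∀ (n : ℕ) (E Y : Finset α), E.card = n →
    (∀ a ∈ E, a ∉ Y ∧ rk (insert a Y) = rk Y + 1) →
    0 < (-1 : ℤ) ^ rk (Y ∪ E) * (-1 : ℤ) ^ rk Y *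
      ∑ D ∈ E.powerset, (if rk (Y ∪ D) = rk (Y ∪ E) then (-1 : ℤ) ^ D.card else 0) := by
  intro n
  induction n using Nat.strong_induction_on with
  | _ n ih =>
  intro E Y hcard hE
  rcases E.eq_empty_or_nonempty with rfl | ⟨e, he⟩
  · simp only [Finset.union_empty, Finset.powerset_empty, Finset.sum_singleton]
    rw [if_pos trivial, Finset.card_empty, pow_zero, mul_one, ← pow_add]
    have hev : Even (rk Y + rk Y) := ⟨rk Y, rfl⟩
    rw [hev.neg_one_pow]
    exact one_pos
  · set r := rk (Y ∪ E) with hr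
    set E' := E.erase e with hE'
    have heE' : e ∉ E' := Finset.notMem_erase e E
    have hEeq : insert e E' = E := Finset.insert_erase he
    have hcard' : E'.card < n := by
      have : E'.card = E.card - 1 := by rw [hE']; exact Finset.card_erase_of_mem he
      have hpos : 0 < E.card := Finset.card_pos.mpr ⟨e, he⟩
      omega
    have heY : e ∉ Y := (hE e he).1
    have heY2 : rk (insert e Y) = rk Y + 1 := (hE e he).2
    set Y₂ := insert e Y with hY₂
    -- split the sum
    rw [← hEeq, Finset.sum_powerset_insert heE']
    -- rewrite the second block
    have hblock2 : ∑ D ∈ E'.powerset,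
        (if rk (Y ∪ insert e D) = r then (-1 : ℤ) ^ (insert e D).card else 0) =
        - ∑ D ∈ E'.powerset, (if rk (Y₂ ∪ D) = r then (-1 : ℤ) ^ D.card else 0) := by
      rw [← Finset.sum_neg_distrib]
      refine Finset.sum_congr rfl (fun D hD => ?_)
      have hDE' : D ⊆ E' := Finset.mem_powerset.mp hD
      have heD : e ∉ D := fun hmem => heE' (hDE' hmem)
      have h1 : Y ∪ insert e D = Y₂ ∪ D := by
        rw [Finset.union_insert, hY₂, Finset.insert_union]
      have h2 : (insert e D).card = D.card + 1 := Finset.card_insert_of_notMem heD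
      rw [h1, h2, pow_succ]
      split <;> ring
    rw [hblock2]
    by_cases hcase : ∃ a ∈ E', rk (insert a Y₂) = rk Y₂
    · -- case (i)
      obtain ⟨a, haE', ha⟩ := hcase
      have haE : a ∈ E := Finset.mem_of_mem_erase haE'
      have haY : rk (insert a Y) = rk Y + 1 := (hE a haE).2
      have hea : rk (insert e (insert a Y)) = rk (insert a Y) := by
        rw [Finset.insert_comm]
        rw [← hY₂] -- insert a Y₂
        rw [ha, heY2, haY]
      have hrE' : rk (Y ∪ E') = r := by
        have hsub : insert a Y ⊆ Y ∪ E' :=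
          Finset.insert_subset (Finset.mem_union_right Y haE') Finset.subset_union_left
        have h3 : rk (insert e (Y ∪ E')) = rk (Y ∪ E') := rk_absorb h hsub hea
        have h4 : insert e (Y ∪ E') = Y ∪ E := by
          rw [← hEeq, Finset.union_insert]
        rw [hr, ← h4, h3]
      -- second block is zero
      have hS2 : ∑ D ∈ E'.powerset, (if rk (Y₂ ∪ D) = r then (-1 : ℤ) ^ D.card else 0) = 0 := by
        set E'' := E'.erase a with hE''
        have haE'' : a ∉ E'' := Finset.notMem_erase a E'
        have hEeq'' : insert a E'' = E' := Finset.insert_erase haE'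
        rw [← hEeq'', Finset.sum_powerset_insert haE'']
        rw [← Finset.sum_add_distrib]
        refine Finset.sum_eq_zero (fun D hD => ?_)
        have hDE'' : D ⊆ E'' := Finset.mem_powerset.mp hD
        have haD : a ∉ D := fun hmem => haE'' (hDE'' hmem)
        have h5 : Y₂ ∪ insert a D = insert a (Y₂ ∪ D) := by rw [Finset.union_insert]
        have h6 : rk (insert a (Y₂ ∪ D)) = rk (Y₂ ∪ D) :=
          rk_absorb h Finset.subset_union_left ha
        have h7 : (insert a D).card = D.card + 1 := Finset.card_insert_of_notMem haD
        rw [h5, h6, h7, pow_succ]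
        split
        · ring
        · simp
      rw [hS2, neg_zero, add_zero]
      have := ih E'.card hcard' E' Y rfl
        (fun b hb => hE b (Finset.mem_of_mem_erase hb))
      rw [hrE'] at this
      exact this
    · -- case (ii)
      push_neg at hcase
      have hY₂rk : rk Y₂ = rk Y + 1 := heY2
      have hY₂E' : Y₂ ∪ E' = Y ∪ E := by
        rw [hY₂, Finset.insert_union, ← Finset.union_insert, hEeq]
      have hE2 : ∀ a ∈ E', a ∉ Y₂ ∧ rk (insert a Y₂) = rk Y₂ + 1 := by
        intro a haE'
        have haE : a ∈ E := Finset.mem_of_mem_erase haE'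
        have hane : a ≠ e := Finset.ne_of_mem_erase haE'
        refine ⟨?_, ?_⟩
        · rw [hY₂, Finset.mem_insert]
          push_neg
          exact ⟨hane, (hE a haE).1⟩
        · have h8 : rk (insert a Y₂) ≤ rk Y₂ + 1 := rk_insert_le h Y₂ a
          have h9 : rk Y₂ ≤ rk (insert a Y₂) := rk_mono h (subset_insert a Y₂)
          have h10 : rk (insert a Y₂) ≠ rk Y₂ := hcase a haE'
          omega
      have hS2pos := ih E'.card hcard' E' Y₂ rfl hE2
      rw [hY₂E'] at hS2pos
      -- handle first block
      by_cases hr' : rk (Y ∪ E') = r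
      · have hS1pos := ih E'.card hcard' E' Y rfl
          (fun b hb => hE b (Finset.mem_of_mem_erase hb))
        rw [hr'] at hS1pos
        have hpow : ((-1 : ℤ)) ^ rk Y₂ = -((-1 : ℤ) ^ rk Y) := by
          rw [hY₂rk, pow_succ]; ring
        rw [hpow] at hS2pos
        set S1 := ∑ D ∈ E'.powerset, (if rk (Y ∪ D) = r then (-1 : ℤ) ^ D.card else 0)
        set S2 := ∑ D ∈ E'.powerset, (if rk (Y₂ ∪ D) = r then (-1 : ℤ) ^ D.card else 0)
        nlinarith [hS1pos, hS2pos]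
      · have hS1zero : ∑ D ∈ E'.powerset,
            (if rk (Y ∪ D) = r then (-1 : ℤ) ^ D.card else 0) = 0 := by
          refine Finset.sum_eq_zero (fun D hD => ?_)
          have hDE' : D ⊆ E' := Finset.mem_powerset.mp hD
          have h11 : rk (Y ∪ D) ≤ rk (Y ∪ E') :=
            rk_mono h (Finset.union_subset_union_right hDE')
          have h12 : rk (Y ∪ E') ≤ r := by
            rw [hr]
            exact rk_mono h (Finset.union_subset_union_right (by rw [← hEeq]; exact Finset.subset_insert e E'))
          rw [if_neg (by omega)]
        rw [hS1zero, zero_add]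
        have hpow : ((-1 : ℤ)) ^ rk Y₂ = -((-1 : ℤ) ^ rk Y) := by
          rw [hY₂rk, pow_succ]; ring
        rw [hpow] at hS2pos
        nlinarith [hS2pos]
end KeyA
section Scol
variable {α : Type*} [DecidableEq α] [Fintype α] {rk : Finset α → ℕ}

def Tsum (rk : Finset α → ℕ) (Y Z : Finset α) : ℤ :=
  ∑ D ∈ (Z \ Y).powerset, (if rk (Y ∪ D) = rk Z then (-1 : ℤ) ^ D.card else 0)

lemma Tsum_pos (h : IsMatroidRk α rk) {Y Z : Finset α} (hY : IsFlat rk Y) (hYZ : Y ⊆ Z) :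
    0 < (-1 : ℤ) ^ rk Z * (-1 : ℤ) ^ rk Y * Tsum rk Y Z := by
  have hYE : Y ∪ Z \ Y = Z := Finset.union_sdiff_of_subset hYZ
  have hconds : ∀ a ∈ Z \ Y, a ∉ Y ∧ rk (insert a Y) = rk Y + 1 := by
    intro a ha
    have haY : a ∉ Y := (Finset.mem_sdiff.mp ha).2
    refine ⟨haY, ?_⟩
    have h1 := hY a haY
    have h2 := rk_insert_le h Y a
    omega
  have := keyA h (Z \ Y).card (Z \ Y) Y rfl hconds
  rw [hYE] at this
  exact this

lemma Scollapse (h : IsMatroidRk α rk) {Y Z : Finset α} (hY : IsFlat rk Y) (hZ : IsFlat rk Z)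
    (hYZ : Y ⊆ Z) (A : Finset α) (hA : matCl rk A = Y) :
    ∑ B ∈ (Finset.univ : Finset (Finset α)),
        (if A ⊆ B ∧ matCl rk B = Z then (-1 : ℤ) ^ B.card else 0) =
      if A = Y then (-1 : ℤ) ^ Y.card * Tsum rk Y Z else 0 := by
  obtain ⟨hAY, hArk⟩ := (matCl_eq_flat_iff h hY A).mp hA
  have hstep1 : ∑ B ∈ (Finset.univ : Finset (Finset α)),
      (if A ⊆ B ∧ matCl rk B = Z then (-1 : ℤ) ^ B.card else 0) =
      ∑ B ∈ Finset.univ.filter (fun B => A ⊆ B ∧ B ⊆ Z ∧ rk B = rk Z), (-1 : ℤ) ^ B.card := by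
    rw [Finset.sum_filter]
    refine Finset.sum_congr rfl (fun B _ => ?_)
    congr 1
    rw [matCl_eq_flat_iff h hZ B]
  have hstep2 : ∑ B ∈ Finset.univ.filter (fun B => A ⊆ B ∧ B ⊆ Z ∧ rk B = rk Z),
      (-1 : ℤ) ^ B.card =
      (-1 : ℤ) ^ A.card * ∑ D ∈ (Z \ A).powerset,
        (if rk (A ∪ D) = rk Z then (-1 : ℤ) ^ D.card else 0) := by
    rw [Finset.mul_sum]
    simp only [mul_ite, mul_zero]
    rw [← Finset.sum_filter]
    refine Finset.sum_nbij' (i := fun B => B \ A) (j := fun D => A ∪ D) ?_ ?_ ?_ ?_ ?_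
    · intro B hB
      simp only [Finset.mem_filter, Finset.mem_univ, true_and] at hB
      obtain ⟨h1, h2, h3⟩ := hB
      simp only [Finset.mem_filter, Finset.mem_powerset]
      refine ⟨Finset.sdiff_subset_sdiff h2 (Finset.Subset.refl A), ?_⟩
      rwa [Finset.union_sdiff_of_subset h1]
    · intro D hD
      simp only [Finset.mem_filter, Finset.mem_powerset] at hD
      obtain ⟨h1, h2⟩ := hD
      simp only [Finset.mem_filter, Finset.mem_univ, true_and]
      have hDZ : D ⊆ Z := h1.trans (Finset.sdiff_subset)
      exact ⟨Finset.subset_union_left, Finset.union_subset (hAY.trans hYZ) hDZ, h2⟩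
    · intro B hB
      simp only [Finset.mem_filter, Finset.mem_univ, true_and] at hB
      exact Finset.union_sdiff_of_subset hB.1
    · intro D hD
      simp only [Finset.mem_filter, Finset.mem_powerset] at hD
      have hdis : Disjoint A D := by
        have := hD.1
        rw [Finset.subset_sdiff] at this
        exact this.2.symm
      exact Finset.union_sdiff_cancel_left hdis
    · intro B hB
      simp only [Finset.mem_filter, Finset.mem_univ, true_and] at hB
      have hcard : (B \ A).card + A.card = B.card := Finset.card_sdiff_add_card_eq_card hB.1
      rw [← hcard, pow_add]
      ring
  rw [hstep1, hstep2]
  by_cases hAeqY : A = Y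
  · subst hAeqY
    rw [if_pos rfl]
    rfl
  · rw [if_neg hAeqY]
    obtain ⟨x, hxY, hxA⟩ := Finset.exists_of_ssubset (hAY.ssubset_of_ne hAeqY)
    have hxZ : x ∈ Z \ A := Finset.mem_sdiff.mpr ⟨hYZ hxY, hxA⟩
    have hxabs : rk (insert x A) = rk A := by
      have : x ∈ matCl rk A := by rw [hA]; exact hxY
      exact mem_matCl_iff.mp this
    have hW : insert x ((Z \ A).erase x) = Z \ A := Finset.insert_erase hxZ
    rw [← hW, Finset.sum_powerset_insert (Finset.notMem_erase x _), ← Finset.sum_add_distrib]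
    rw [Finset.sum_eq_zero, mul_zero]
    intro D hD
    have hDW : D ⊆ (Z \ A).erase x := Finset.mem_powerset.mp hD
    have hxD : x ∉ D := fun hmem => (Finset.notMem_erase x _) (hDW hmem)
    have h5 : A ∪ insert x D = insert x (A ∪ D) := by rw [Finset.union_insert]
    have h6 : rk (insert x (A ∪ D)) = rk (A ∪ D) :=
      rk_absorb h Finset.subset_union_left hxabs
    have h7 : (insert x D).card = D.card + 1 := Finset.card_insert_of_notMem hxD
    rw [h5, h6, h7, pow_succ]
    split
    · ring
    · simp
end Scol
set_option linter.unusedSectionVars false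
section Peel
variable {α : Type*} [DecidableEq α] [Fintype α] {rk : Finset α → ℕ}

lemma chainMu_eq_sum_ite (rk : Finset α → ℕ) (k : ℕ) (X : Fin k → Finset α) :
    chainMu rk k X = ∑ f : Fin k → Finset α,
      (if (∀ i j : Fin k, i ≤ j → f i ⊆ f j) ∧ (∀ i, matCl rk (f i) = X i)
       then ∏ i, (-1 : ℤ) ^ (f i).card else 0) := by
  rw [chainMu, chains, Finset.filter_filter, Finset.sum_filter]

lemma sum_snoc {n : ℕ} (F : (Fin (n + 1) → Finset α) → ℤ) :
    ∑ f : Fin (n + 1) → Finset α, F f =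
      ∑ g : Fin n → Finset α, ∑ B : Finset α, F (Fin.snoc g B) := by
  rw [← Equiv.sum_comp (Fin.snocEquiv (fun _ => Finset α)) F, Fintype.sum_prod_type]
  rw [Finset.sum_comm]
  rfl

lemma chain_snoc {n : ℕ} {g : Fin n → Finset α} {B : Finset α} :
    (∀ i j : Fin (n + 1), i ≤ j → (Fin.snoc g B : Fin (n + 1) → Finset α) i ⊆
        (Fin.snoc g B : Fin (n + 1) → Finset α) j) ↔
      ((∀ i j : Fin n, i ≤ j → g i ⊆ g j) ∧ ∀ i : Fin n, g i ⊆ B) := by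
  constructor
  · intro H
    constructor
    · intro i j hij
      have := H i.castSucc j.castSucc (Fin.castSucc_le_castSucc_iff.mpr hij)
      rwa [Fin.snoc_castSucc, Fin.snoc_castSucc] at this
    · intro i
      have := H i.castSucc (Fin.last n) (Fin.le_last _)
      rwa [Fin.snoc_castSucc, Fin.snoc_last] at this
  · rintro ⟨h1, h2⟩ i j hij
    rcases Fin.eq_castSucc_or_eq_last j with ⟨j', rfl⟩ | rfl
    · rcases Fin.eq_castSucc_or_eq_last i with ⟨i', rfl⟩ | rfl
      · rw [Fin.snoc_castSucc, Fin.snoc_castSucc]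
        exact h1 i' j' (Fin.castSucc_le_castSucc_iff.mp hij)
      · exfalso
        have h1 := le_antisymm hij (Fin.le_last _)
        exact absurd h1.symm (Fin.ne_of_lt (Fin.castSucc_lt_last j'))
    · rcases Fin.eq_castSucc_or_eq_last i with ⟨i', rfl⟩ | rfl
      · rw [Fin.snoc_castSucc, Fin.snoc_last]
        exact h2 i'
      · rw [Fin.snoc_last]

lemma prod_snoc {n : ℕ} (g : Fin n → Finset α) (B : Finset α) :
    (∏ i : Fin (n + 1), (-1 : ℤ) ^ ((Fin.snoc g B : Fin (n + 1) → Finset α) i).card) =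
      (∏ i : Fin n, (-1 : ℤ) ^ (g i).card) * (-1 : ℤ) ^ B.card := by
  rw [Fin.prod_univ_castSucc]
  congr 1
  · exact Finset.prod_congr rfl (fun i _ => by rw [Fin.snoc_castSucc])
  · rw [Fin.snoc_last]

end Peel
section Peel2
variable {α : Type*} [DecidableEq α] [Fintype α] {rk : Finset α → ℕ}

lemma matCl_snoc_iff {m : ℕ} (X : Fin (m + 2) → Finset α) (g : Fin (m + 1) → Finset α)
    (B : Finset α) :
    (∀ i : Fin (m + 2), matCl rk ((Fin.snoc g B : Fin (m + 2) → Finset α) i) = X i) ↔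
      (∀ i : Fin (m + 1), matCl rk (g i) = X i.castSucc) ∧
        matCl rk B = X (Fin.last (m + 1)) := by
  rw [Fin.forall_fin_succ']
  constructor
  · rintro ⟨h1, h2⟩
    refine ⟨fun i => ?_, ?_⟩
    · have := h1 i; rwa [Fin.snoc_castSucc] at this
    · rwa [Fin.snoc_last] at h2
  · rintro ⟨h1, h2⟩
    refine ⟨fun i => ?_, ?_⟩
    · rw [Fin.snoc_castSucc]; exact h1 i
    · rwa [Fin.snoc_last]

lemma peel2 (h : IsMatroidRk α rk) {m : ℕ}
    (X : Fin (m + 2) → Finset α) (hX : ∀ i j : Fin (m + 2), i ≤ j → X i ⊆ X j)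
    (hflat : ∀ i, IsFlat rk (X i)) :
    chainMu rk (m + 2) X =
      Tsum rk (X (Fin.castSucc (Fin.last m))) (X (Fin.last (m + 1))) *
        chainMu rk m (fun i => X i.castSucc.castSucc) := by
  set Y := X (Fin.castSucc (Fin.last m)) with hYdef
  set Z := X (Fin.last (m + 1)) with hZdef
  have hYflat : IsFlat rk Y := hflat _
  have hZflat : IsFlat rk Z := hflat _
  have hYZ : Y ⊆ Z := hX _ _ (Fin.le_last _)
  rw [chainMu_eq_sum_ite, sum_snoc]
  have hYY : (-1 : ℤ) ^ Y.card * (-1 : ℤ) ^ Y.card = 1 := by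
    rw [← pow_add]
    exact Even.neg_one_pow ⟨Y.card, rfl⟩
  trans (∑ g : Fin (m + 1) → Finset α,
      (if (∀ i j : Fin (m + 1), i ≤ j → g i ⊆ g j) ∧
          (∀ i : Fin (m + 1), matCl rk (g i) = X i.castSucc) ∧ g (Fin.last m) = Y
       then (∏ i : Fin (m + 1), (-1 : ℤ) ^ (g i).card) * ((-1 : ℤ) ^ Y.card * Tsum rk Y Z)
       else 0))
  · refine Finset.sum_congr rfl (fun g _ => ?_)
    by_cases hg : (∀ i j : Fin (m + 1), i ≤ j → g i ⊆ g j) ∧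
        (∀ i : Fin (m + 1), matCl rk (g i) = X i.castSucc)
    · have hA : matCl rk (g (Fin.last m)) = Y := hg.2 (Fin.last m)
      have hcondiff : ∀ B : Finset α,
          ((∀ i j : Fin (m + 2), i ≤ j → (Fin.snoc g B : Fin (m + 2) → Finset α) i ⊆
              (Fin.snoc g B : Fin (m + 2) → Finset α) j) ∧
            (∀ i, matCl rk ((Fin.snoc g B : Fin (m + 2) → Finset α) i) = X i)) ↔
          (g (Fin.last m) ⊆ B ∧ matCl rk B = Z) := by
        intro B
        rw [chain_snoc, matCl_snoc_iff]
        constructor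
        · rintro ⟨⟨_, hsub⟩, _, hB⟩
          exact ⟨hsub (Fin.last m), hB⟩
        · rintro ⟨hsub, hB⟩
          exact ⟨⟨hg.1, fun i => (hg.1 i (Fin.last m) (Fin.le_last i)).trans hsub⟩,
            hg.2, hB⟩
      have hterm : ∀ B : Finset α,
          (if (∀ i j : Fin (m + 2), i ≤ j → (Fin.snoc g B : Fin (m + 2) → Finset α) i ⊆
              (Fin.snoc g B : Fin (m + 2) → Finset α) j) ∧
            (∀ i, matCl rk ((Fin.snoc g B : Fin (m + 2) → Finset α) i) = X i)
           then ∏ i, (-1 : ℤ) ^ ((Fin.snoc g B : Fin (m + 2) → Finset α) i).card else 0) =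
          (∏ i : Fin (m + 1), (-1 : ℤ) ^ (g i).card) *
            (if g (Fin.last m) ⊆ B ∧ matCl rk B = Z then (-1 : ℤ) ^ B.card else 0) := by
        intro B
        rw [if_congr (hcondiff B) (prod_snoc g B) rfl, mul_ite, mul_zero]
      rw [Finset.sum_congr rfl (fun B _ => hterm B), ← Finset.mul_sum,
        Scollapse h hYflat hZflat hYZ (g (Fin.last m)) hA]
      have hiff : ((∀ i j : Fin (m + 1), i ≤ j → g i ⊆ g j) ∧
          (∀ i : Fin (m + 1), matCl rk (g i) = X i.castSucc) ∧ g (Fin.last m) = Y) ↔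
          g (Fin.last m) = Y := ⟨fun hc => hc.2.2, fun hc => ⟨hg.1, hg.2, hc⟩⟩
      rw [if_congr hiff rfl rfl, mul_ite, mul_zero]
    · rw [if_neg (fun hc => hg ⟨hc.1, hc.2.1⟩)]
      refine Finset.sum_eq_zero (fun B _ => ?_)
      rw [if_neg]
      rintro ⟨hchain, hcl⟩
      rw [chain_snoc] at hchain
      rw [matCl_snoc_iff] at hcl
      exact hg ⟨hchain.1, hcl.1⟩
  · rw [chainMu_eq_sum_ite, Finset.mul_sum, sum_snoc]
    refine Finset.sum_congr rfl (fun g' _ => ?_)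
    rw [Finset.sum_eq_single Y (fun B' _ hB' => ?_) (fun hY => absurd (Finset.mem_univ Y) hY)]
    swap
    · rw [if_neg]
      rintro ⟨_, _, heq⟩
      rw [Fin.snoc_last] at heq
      exact hB' heq
    by_cases hg' : (∀ i j : Fin m, i ≤ j → g' i ⊆ g' j) ∧
        (∀ i : Fin m, matCl rk (g' i) = X i.castSucc.castSucc)
    · have hsubY : ∀ i : Fin m, g' i ⊆ Y := by
        intro i
        have h1 : g' i ⊆ X i.castSucc.castSucc :=
          ((matCl_eq_flat_iff h (hflat _) _).mp (hg'.2 i)).1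
        exact h1.trans (hX _ _ (Fin.castSucc_le_castSucc_iff.mpr (Fin.le_last _)))
      have hcond : (∀ i j : Fin (m + 1), i ≤ j →
            (Fin.snoc g' Y : Fin (m + 1) → Finset α) i ⊆
              (Fin.snoc g' Y : Fin (m + 1) → Finset α) j) ∧
          (∀ i : Fin (m + 1), matCl rk ((Fin.snoc g' Y : Fin (m + 1) → Finset α) i) =
            X i.castSucc) ∧
          (Fin.snoc g' Y : Fin (m + 1) → Finset α) (Fin.last m) = Y := by
        refine ⟨chain_snoc.mpr ⟨hg'.1, hsubY⟩, ?_, by rw [Fin.snoc_last]⟩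
        intro i
        rcases Fin.eq_castSucc_or_eq_last i with ⟨i', rfl⟩ | rfl
        · rw [Fin.snoc_castSucc]
          exact hg'.2 i'
        · rw [Fin.snoc_last]
          exact matCl_self_of_flat h hYflat
      rw [if_pos hcond, if_pos hg', prod_snoc]
      linear_combination ((∏ i : Fin m, (-1 : ℤ) ^ (g' i).card) * Tsum rk Y Z) * hYY
    · rw [if_neg hg', mul_zero, if_neg]
      rintro ⟨hchain, hcl, _⟩
      rw [chain_snoc] at hchain
      refine hg' ⟨hchain.1, fun i => ?_⟩
      have := hcl i.castSucc
      rwa [Fin.snoc_castSucc] at this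
end Peel2
section Main
variable {α : Type*} [DecidableEq α] [Fintype α] {rk : Finset α → ℕ}

lemma empty_flat (h : IsMatroidRk α rk) (hs1 : ∀ a : α, rk {a} = 1) :
    IsFlat rk (∅ : Finset α) := by
  intro a _
  rw [Finset.insert_empty, hs1 a, h.1]
  exact one_pos

lemma chainMu_one (h : IsMatroidRk α rk) (hs1 : ∀ a : α, rk {a} = 1)
    (X : Fin 1 → Finset α) (hflat : ∀ i, IsFlat rk (X i)) :
    chainMu rk 1 X = Tsum rk ∅ (X 0) := by
  rw [chainMu_eq_sum_ite]
  have hYflat : IsFlat rk (∅ : Finset α) := empty_flat h hs1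
  have hA : matCl rk (∅ : Finset α) = ∅ :=
    (matCl_eq_flat_iff h hYflat ∅).mpr ⟨Finset.Subset.refl _, rfl⟩
  have hcol := Scollapse h hYflat (hflat 0) (Finset.empty_subset (X 0)) ∅ hA
  rw [if_pos rfl, Finset.card_empty, pow_zero, one_mul] at hcol
  rw [← hcol]
  rw [← Equiv.sum_comp (Equiv.funUnique (Fin 1) (Finset α)).symm]
  refine Finset.sum_congr rfl (fun B _ => ?_)
  have h1 : ((∀ i j : Fin 1, i ≤ j → (Equiv.funUnique (Fin 1) (Finset α)).symm B i ⊆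
        (Equiv.funUnique (Fin 1) (Finset α)).symm B j) ∧
      (∀ i, matCl rk ((Equiv.funUnique (Fin 1) (Finset α)).symm B i) = X i)) ↔
      (∅ ⊆ B ∧ matCl rk B = X 0) := by
    constructor
    · rintro ⟨_, h2⟩
      exact ⟨Finset.empty_subset B, h2 0⟩
    · rintro ⟨_, h2⟩
      refine ⟨fun i j _ => ?_, fun i => ?_⟩
      · have : i = j := Subsingleton.elim i j
        rw [this]
      · have : i = 0 := Subsingleton.elim i 0
        rw [this]
        exact h2
  rw [if_congr h1 rfl rfl]
  rw [Fin.prod_univ_one]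
  rfl

lemma main_aux (h : IsMatroidRk α rk) (hs1 : ∀ a : α, rk {a} = 1) :
    ∀ (k : ℕ) (X : Fin k → Finset α), (∀ i j : Fin k, i ≤ j → X i ⊆ X j) →
      (∀ i, IsFlat rk (X i)) →
      0 < (∏ i, (-1 : ℤ) ^ (rk (X i))) * chainMu rk k X := by
  intro k
  induction k using Nat.strong_induction_on with
  | _ k ih =>
  match k with
  | 0 =>
    intro X _ _
    have h0 : chainMu rk 0 X = 1 := by
      rw [chainMu_eq_sum_ite]
      simp
    rw [h0]
    simp
  | 1 =>
    intro X _ hflat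
    rw [chainMu_one h hs1 X hflat]
    have := Tsum_pos h (empty_flat h hs1) (Finset.empty_subset (X 0))
    rw [h.1, pow_zero, mul_one] at this
    rw [Fin.prod_univ_one]
    exact this
  | (m + 2) =>
    intro X hX hflat
    rw [peel2 h X hX hflat]
    have h1 := ih m (by omega) (fun i => X i.castSucc.castSucc)
      (fun i j hij => hX _ _ (by
        rw [Fin.castSucc_le_castSucc_iff, Fin.castSucc_le_castSucc_iff]
        exact hij))
      (fun i => hflat _)
    have h2 := Tsum_pos h (hflat (Fin.castSucc (Fin.last m)))
      (hX _ _ (Fin.le_last (Fin.castSucc (Fin.last m))) :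
        X (Fin.castSucc (Fin.last m)) ⊆ X (Fin.last (m + 1)))
    rw [Fin.prod_univ_castSucc (fun i : Fin (m + 2) => (-1 : ℤ) ^ rk (X i)),
      Fin.prod_univ_castSucc (fun i : Fin (m + 1) => (-1 : ℤ) ^ rk (X i.castSucc))]
    nlinarith [mul_pos h2 h1]

end Main

/-- for a simple matroid the k-th chain Möbius function is nonzero
on every chain of flats, with sign ∏ᵢ (−1)^{rk Xᵢ}. -/
theorem chainMu_sign {α : Type*} [DecidableEq α] [Fintype α]
    (rk : Finset α → ℕ) (h : IsMatroidRk α rk) (hs : IsSimpleRk rk) (k : ℕ)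
    (X : Fin k → Finset α) (hX : X ∈ chains α k) (hflat : ∀ i, IsFlat rk (X i)) :
    0 < (∏ i, (-1 : ℤ) ^ (rk (X i))) * chainMu rk k X :=
  main_aux h hs.1 k X ((Finset.mem_filter.mp hX).2) hflat
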